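/- If H is a chainless subgroup of PL₊(I), then H is balanced: for every subgroup G ≤ H and every orbital A of G, every element of G that realises one end of A also realises the other end of A. -/

import Mathlib

open Set

namespace PLPaper

/-- We model `PL₊(I)` inside the group of bijections of `ℝ` with *opposite*
composition, so that the group acts on `ℝ` on the right:
`x · (g * h) = (x · g) · h`. -/
abbrev PermR : Type := (Equiv.Perm ℝ)ᵐᵒᵖ

/-- The (right) action of `g` on the point `x`. -/
def ap (g : PermR) (x : ℝ) : ℝ := g.unop x

/-- `g` is affine on a neighbourhood of `x`. -/
def IsLocallyAffineAt (g : PermR) (x : ℝ) : Prop :=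
  ∃ m b : ℝ, ∀ᶠ y in nhds x, ap g y = m * y + b

/-- The breakpoints of `g`: points of `(0,1)` where `g` is not locally affine
(equivalently, for a PL map, where the derivative fails to exist). -/
def Breakpoints (g : PermR) : Set ℝ :=
  {x ∈ Ioo (0:ℝ) 1 | ¬ IsLocallyAffineAt g x}

/-- `g` is an orientation-preserving piecewise-linear homeomorphism of `[0,1]`
(extended by the identity to all of `ℝ`), with finitely many breakpoints. -/
def IsPL (g : PermR) : Prop :=
  StrictMono (ap g) ∧ (∀ x ∉ Ioo (0:ℝ) 1, ap g x = x) ∧ (Breakpoints g).Finite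

/-- The support of `g`. -/
def Supp (g : PermR) : Set ℝ := {x | ap g x ≠ x}

/-- `(a,b)` is an orbital of `g`, i.e. a connected component of `Supp g`. -/
def IsOrbital (g : PermR) (a b : ℝ) : Prop :=
  a < b ∧ Ioo a b ⊆ Supp g ∧ a ∉ Supp g ∧ b ∉ Supp g

/-- The support of a subgroup `G`. -/
def GSupp (G : Subgroup PermR) : Set ℝ := ⋃ g ∈ (G : Set PermR), Supp g

/-- `(a,b)` is an orbital of the group `G`, i.e. a connected component of its support. -/
def IsGroupOrbital (G : Subgroup PermR) (a b : ℝ) : Prop :=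
  a < b ∧ Ioo a b ⊆ GSupp G ∧ a ∉ GSupp G ∧ b ∉ GSupp G

/-- The pair `g, h` carries a transition chain: orbitals `(a,b)` of `g` and
`(c,d)` of `h` with `a < c < b < d`. -/
def ElemsTransitionChain (g h : PermR) : Prop :=
  ∃ a b c d : ℝ, IsOrbital g a b ∧ IsOrbital h c d ∧ a < c ∧ c < b ∧ b < d

/-- The pair `g, h` carries a one-sided overlap: orbitals `(a,b)` of `g` and
`(a,c)` of `h`, or `(a,b)` of `g` and `(c,b)` of `h`, where `a < c < b`. -/
def ElemsOneSidedOverlap (g h : PermR) : Prop :=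
  ∃ a b c : ℝ, a < c ∧ c < b ∧
    ((IsOrbital g a b ∧ IsOrbital h a c) ∨ (IsOrbital g a b ∧ IsOrbital h c b))

def AdmitsTransitionChain (G : Subgroup PermR) : Prop :=
  ∃ g ∈ G, ∃ h ∈ G, ElemsTransitionChain g h

def AdmitsOneSidedOverlap (G : Subgroup PermR) : Prop :=
  ∃ g ∈ G, ∃ h ∈ G, ElemsOneSidedOverlap g h

/-- `G` admits a bad overlap: orbitals `A` of `f ∈ G` and `B` of `g ∈ G` which
intersect, are distinct, and neither closure is contained in the other orbital. -/
def AdmitsBadOverlap (G : Subgroup PermR) : Prop :=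
  ∃ f ∈ G, ∃ g ∈ G, ∃ a b c d : ℝ, IsOrbital f a b ∧ IsOrbital g c d ∧
    (Ioo a b ∩ Ioo c d).Nonempty ∧ Ioo a b ≠ Ioo c d ∧
    ¬ Icc a b ⊆ Ioo c d ∧ ¬ Icc c d ⊆ Ioo a b

/-- A tower: a set of signed orbitals `((a,b), g)` with pairwise nested orbitals,
where equal orbitals force equal signatures. -/
def IsTower (T : Set ((ℝ × ℝ) × PermR)) : Prop :=
  (∀ p ∈ T, IsOrbital p.2 p.1.1 p.1.2) ∧
  (∀ p ∈ T, ∀ q ∈ T,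
      Ioo p.1.1 p.1.2 ⊆ Ioo q.1.1 q.1.2 ∨ Ioo q.1.1 q.1.2 ⊆ Ioo p.1.1 p.1.2) ∧
  (∀ p ∈ T, ∀ q ∈ T, p.1 = q.1 → p.2 = q.2)

/-- `G` admits the tower `T` if `T` is a tower all of whose signatures lie in `G`. -/
def AdmitsTower (G : Subgroup PermR) (T : Set ((ℝ × ℝ) × PermR)) : Prop :=
  IsTower T ∧ ∀ p ∈ T, p.2 ∈ G

def AdmitsInfiniteTower (G : Subgroup PermR) : Prop :=
  ∃ T : Set ((ℝ × ℝ) × PermR), AdmitsTower G T ∧ T.Infinite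

/-- The set of breakpoints of the elements of a set `S`. -/
def BreakSet (S : Set PermR) : Set ℝ := ⋃ g ∈ S, Breakpoints g

/-- The derived length of a group: the least `n` with `derivedSeries G n = ⊥`. -/
noncomputable def derivedLength (G : Type*) [Group G] : ℕ :=
  sInf {n : ℕ | derivedSeries G n = ⊥}

/-- `g` realises the left end of the interval `(a,d)`:
`g` has an orbital `(a,b)` with `b ≤ d`. -/
def RealisesLeftEnd (g : PermR) (a d : ℝ) : Prop := ∃ b : ℝ, b ≤ d ∧ IsOrbital g a b

/-- `g` realises the right end of the interval `(a,d)`: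
`g` has an orbital `(c,d)` with `a ≤ c`. -/
def RealisesRightEnd (g : PermR) (a d : ℝ) : Prop := ∃ c : ℝ, a ≤ c ∧ IsOrbital g c d


/-! ### Basic facts about `ap` -/

lemma ap_mul (g h : PermR) (x : ℝ) : ap (g * h) x = ap h (ap g x) := rfl

lemma ap_one (x : ℝ) : ap 1 x = x := rfl

lemma ap_inv_ap (g : PermR) (x : ℝ) : ap g⁻¹ (ap g x) = x := by
  simp [ap]

lemma ap_ap_inv (g : PermR) (x : ℝ) : ap g (ap g⁻¹ x) = x := by
  simp [ap]

lemma strictMono_inv {g : PermR} (hg : StrictMono (ap g)) : StrictMono (ap g⁻¹) := by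
  intro x y hxy
  by_contra hle
  push_neg at hle
  have := hg.monotone hle
  rw [ap_ap_inv, ap_ap_inv] at this
  exact absurd this (not_le.mpr hxy)

lemma ap_inv_fix {g : PermR} {x : ℝ} (hx : ap g x = x) : ap g⁻¹ x = x := by
  conv_lhs => rw [← hx, ap_inv_ap]

lemma mem_supp_iff {g : PermR} {x : ℝ} : x ∈ Supp g ↔ ap g x ≠ x := Iff.rfl

lemma notMem_supp {g : PermR} {x : ℝ} : x ∉ Supp g ↔ ap g x = x := by
  simp [Supp]

lemma supp_inv (g : PermR) : Supp g⁻¹ = Supp g := by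
  ext x
  simp only [mem_supp_iff]
  constructor
  · intro h
    intro hfix
    exact h (ap_inv_fix hfix)
  · intro h hfix
    have := congrArg (ap g) hfix
    rw [ap_ap_inv] at this
    exact h this.symm

lemma supp_subset_Ioo {g : PermR} (hg : IsPL g) : Supp g ⊆ Ioo (0:ℝ) 1 := by
  intro x hx
  by_contra hmem
  exact hx (hg.2.1 x hmem)

lemma isOrbital_inv {g : PermR} {α β : ℝ} (h : IsOrbital g α β) : IsOrbital g⁻¹ α β := by
  obtain ⟨h1, h2, h3, h4⟩ := h
  refine ⟨h1, ?_, ?_, ?_⟩ <;> rw [supp_inv] <;> assumption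

lemma isPL_inv {g : PermR} (hg : IsPL g) : StrictMono (ap g⁻¹) := strictMono_inv hg.1
lemma exists_orbital {g : PermR} (hg : IsPL g) {x : ℝ} (hx : x ∈ Supp g) :
    ∃ α β : ℝ, IsOrbital g α β ∧ α < x ∧ x < β := by
  have hx01 : x ∈ Ioo (0:ℝ) 1 := supp_subset_Ioo hg hx
  have hmono := hg.1
  have hmono' := strictMono_inv hg.1
  -- the set of fixed points below x
  set A : Set ℝ := {y | y ≤ x ∧ ap g y = y} with hA
  have hA0 : (0:ℝ) ∈ A := ⟨le_of_lt hx01.1, hg.2.1 0 (by simp)⟩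
  have hAne : A.Nonempty := ⟨0, hA0⟩
  have hAbdd : BddAbove A := ⟨x, fun y hy => hy.1⟩
  set α := sSup A with hα
  have hαle : α ≤ x := csSup_le hAne fun y hy => hy.1
  have hαfix : ap g α = α := by
    have h1 : α ≤ ap g α := by
      apply csSup_le hAne
      intro y hy
      calc y = ap g y := hy.2.symm
        _ ≤ ap g α := hmono.monotone (le_csSup hAbdd hy)
    have h2 : α ≤ ap g⁻¹ α := by
      apply csSup_le hAne
      intro y hy
      calc y = ap g⁻¹ y := (ap_inv_fix hy.2).symm
        _ ≤ ap g⁻¹ α := hmono'.monotone (le_csSup hAbdd hy)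
    have h3 : ap g α ≤ ap g (ap g⁻¹ α) := hmono.monotone h2
    rw [ap_ap_inv] at h3
    exact le_antisymm h3 h1
  have hαlt : α < x := lt_of_le_of_ne hαle (fun h => hx (h ▸ hαfix))
  -- the set of fixed points above x
  set B : Set ℝ := {y | x ≤ y ∧ ap g y = y} with hB
  have hB1 : (1:ℝ) ∈ B := ⟨le_of_lt hx01.2, hg.2.1 1 (by simp)⟩
  have hBne : B.Nonempty := ⟨1, hB1⟩
  have hBbdd : BddBelow B := ⟨x, fun y hy => hy.1⟩
  set β := sInf B with hβ
  have hβge : x ≤ β := le_csInf hBne fun y hy => hy.1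
  have hβfix : ap g β = β := by
    have h1 : ap g β ≤ β := by
      apply le_csInf hBne
      intro y hy
      calc ap g β ≤ ap g y := hmono.monotone (csInf_le hBbdd hy)
        _ = y := hy.2
    have h2 : ap g⁻¹ β ≤ β := by
      apply le_csInf hBne
      intro y hy
      calc ap g⁻¹ β ≤ ap g⁻¹ y := hmono'.monotone (csInf_le hBbdd hy)
        _ = y := ap_inv_fix hy.2
    have h3 : ap g (ap g⁻¹ β) ≤ ap g β := hmono.monotone h2
    rw [ap_ap_inv] at h3
    exact le_antisymm h1 h3
  have hβgt : x < β := lt_of_le_of_ne hβge (fun h => hx (h ▸ hβfix))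
  refine ⟨α, β, ⟨lt_trans hαlt hβgt, ?_, ?_, ?_⟩, hαlt, hβgt⟩
  · intro z hz
    rw [mem_supp_iff]
    intro hzfix
    rcases le_or_gt z x with h | h
    · exact absurd (le_csSup hAbdd (⟨h, hzfix⟩ : z ∈ A)) (not_le.mpr hz.1)
    · exact absurd (csInf_le hBbdd (⟨le_of_lt h, hzfix⟩ : z ∈ B)) (not_le.mpr hz.2)
  · rw [notMem_supp]; exact hαfix
  · rw [notMem_supp]; exact hβfix

lemma ap_eq_self_of_notMem_GSupp {G : Subgroup PermR} {w : PermR} (hw : w ∈ G) {x : ℝ}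
    (hx : x ∉ GSupp G) : ap w x = x := by
  rw [← notMem_supp]
  intro hmem
  exact hx (by exact Set.mem_biUnion hw hmem)

lemma isOrbital_conj {g w : PermR} (hw : StrictMono (ap w)) {α β : ℝ}
    (h : IsOrbital g α β) : IsOrbital (w⁻¹ * g * w) (ap w α) (ap w β) := by
  have hw' := strictMono_inv hw
  have key : ∀ x : ℝ, ap (w⁻¹ * g * w) x = ap w (ap g (ap w⁻¹ x)) := by
    intro x; rfl
  obtain ⟨h1, h2, h3, h4⟩ := h
  refine ⟨hw h1, ?_, ?_, ?_⟩
  · intro z hz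
    rw [mem_supp_iff, key]
    have hz' : ap w⁻¹ z ∈ Ioo α β := by
      constructor
      · have := hw' hz.1; rwa [ap_inv_ap] at this
      · have := hw' hz.2; rwa [ap_inv_ap] at this
    have := h2 hz'
    rw [mem_supp_iff] at this
    intro hcon
    apply this
    have := congrArg (ap w⁻¹) hcon
    rwa [ap_inv_ap] at this
  · rw [notMem_supp, key, ap_inv_ap, notMem_supp.mp h3]
  · rw [notMem_supp, key, ap_inv_ap, notMem_supp.mp h4]
/-- Two affine functions agreeing on a nonempty open interval have equal coefficients. -/
lemma affine_coeff_eq {m b m' b' p q : ℝ} (hpq : p < q)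
    (h : ∀ y, p < y → y < q → m * y + b = m' * y + b') : m = m' ∧ b = b' := by
  have hy1 : p < p + (q - p)/3 := by linarith
  have hy2 : p + (q-p)/3 < p + (q-p)/2 := by linarith
  have hy3 : p + (q-p)/2 < q := by linarith
  have e1 := h _ hy1 (lt_trans hy2 hy3)
  have e2 := h _ (lt_trans hy1 hy2) hy3
  have hm : m = m' := by
    have hne : (p + (q-p)/3) ≠ (p + (q-p)/2) := ne_of_lt hy2
    have : (m - m') * ((p + (q-p)/3) - (p + (q-p)/2)) = 0 := by ring_nf; nlinarith [e1, e2]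
    rcases mul_eq_zero.mp this with h | h
    · linarith [sub_eq_zero.mp h]
    · exact absurd (sub_eq_zero.mp h) hne
  refine ⟨hm, ?_⟩
  rw [hm] at e1; linarith

/-- A function which is locally affine at every point of an open interval is affine there. -/
lemma affine_on_Ioo {f : ℝ → ℝ} {s t : ℝ} (hst : s < t)
    (h : ∀ x, s < x → x < t → ∃ m b : ℝ, ∀ᶠ y in nhds x, f y = m * y + b) :
    ∃ m b : ℝ, ∀ x, s < x → x < t → f x = m * x + b := by
  set x₀ := (s + t)/2 with hx₀
  have hx₀s : s < x₀ := by simp only [hx₀]; linarith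
  have hx₀t : x₀ < t := by simp only [hx₀]; linarith
  obtain ⟨m, b, hmb⟩ := h x₀ hx₀s hx₀t
  rw [Metric.eventually_nhds_iff] at hmb
  obtain ⟨δ, hδ, hball⟩ := hmb
  refine ⟨m, b, ?_⟩
  -- rightward propagation
  have hright : ∀ x, x₀ ≤ x → x < t → f x = m * x + b := by
    set D : Set ℝ := {u | x₀ ≤ u ∧ u < t ∧ ∀ x, x₀ ≤ x → x ≤ u → f x = m * x + b} with hD
    have hu₀mem : min ((x₀ + t)/2) (x₀ + δ/2) ∈ D := by
      refine ⟨le_min (by linarith) (by linarith), lt_of_le_of_lt (min_le_left _ _) (by linarith), ?_⟩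
      intro x hx1 hx2
      apply hball
      rw [Real.dist_eq, abs_lt]
      have := le_trans hx2 (min_le_right _ _)
      constructor <;> linarith
    have hDne : D.Nonempty := ⟨_, hu₀mem⟩
    have hDbdd : BddAbove D := ⟨t, fun u hu => le_of_lt hu.2.1⟩
    set U := sSup D with hU
    have hUx₀ : x₀ < U := lt_of_lt_of_le (by
        have : x₀ < min ((x₀ + t)/2) (x₀ + δ/2) := lt_min (by linarith) (by linarith)
        exact this) (le_csSup hDbdd hu₀mem)
    have hUt : U ≤ t := csSup_le hDne fun u hu => le_of_lt hu.2.1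
    have hbelow : ∀ x, x₀ ≤ x → x < U → f x = m * x + b := by
      intro x hx1 hx2
      obtain ⟨u, huD, hxu⟩ := exists_lt_of_lt_csSup hDne hx2
      exact huD.2.2 x hx1 (le_of_lt hxu)
    have hUt' : U = t := by
      by_contra hne
      have hUt2 : U < t := lt_of_le_of_ne hUt hne
      obtain ⟨m', b', hmb'⟩ := h U (lt_trans hx₀s hUx₀) hUt2
      rw [Metric.eventually_nhds_iff] at hmb'
      obtain ⟨δ', hδ', hball'⟩ := hmb'
      -- agreement on (max x₀ (U - δ'), U)
      have hagree : ∀ y, max x₀ (U - δ') < y → y < U → m * y + b = m' * y + b' := by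
        intro y hy1 hy2
        have h1 : f y = m * y + b := hbelow y (le_of_lt (lt_of_le_of_lt (le_max_left _ _) hy1)) hy2
        have h2 : f y = m' * y + b' := by
          apply hball'
          rw [Real.dist_eq, abs_lt]
          have := lt_of_le_of_lt (le_max_right _ _) hy1
          constructor <;> linarith
        rw [← h1, ← h2]
      have hlt : max x₀ (U - δ') < U := max_lt hUx₀ (by linarith)
      obtain ⟨hm, hb⟩ := affine_coeff_eq hlt hagree
      -- extend beyond U
      set u' := min ((U + t)/2) (U + δ'/2) with hu'
      have hu'U : U < u' := lt_min (by linarith) (by linarith)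
      have hu'D : u' ∈ D := by
        refine ⟨le_of_lt (lt_trans hUx₀ hu'U), lt_of_le_of_lt (min_le_left _ _) (by linarith), ?_⟩
        intro x hx1 hx2
        rcases lt_or_ge x U with hc | hc
        · exact hbelow x hx1 hc
        · rw [hm, hb]
          apply hball'
          rw [Real.dist_eq, abs_lt]
          have := le_trans hx2 (min_le_right _ _)
          constructor <;> linarith
      exact absurd (le_csSup hDbdd hu'D) (not_le.mpr hu'U)
    intro x hx1 hx2
    exact hbelow x hx1 (hUt' ▸ hx2)
  -- leftward propagation
  have hleft : ∀ x, s < x → x ≤ x₀ → f x = m * x + b := by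
    set D : Set ℝ := {u | u ≤ x₀ ∧ s < u ∧ ∀ x, u ≤ x → x ≤ x₀ → f x = m * x + b} with hD
    have hu₀mem : max ((s + x₀)/2) (x₀ - δ/2) ∈ D := by
      refine ⟨max_le (by linarith) (by linarith), lt_of_lt_of_le (by linarith) (le_max_left _ _), ?_⟩
      intro x hx1 hx2
      apply hball
      rw [Real.dist_eq, abs_lt]
      have := le_trans (le_max_right _ _) hx1
      constructor <;> linarith
    have hDne : D.Nonempty := ⟨_, hu₀mem⟩
    have hDbdd : BddBelow D := ⟨s, fun u hu => le_of_lt hu.2.1⟩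
    set U := sInf D with hU
    have hUx₀ : U < x₀ := lt_of_le_of_lt (csInf_le hDbdd hu₀mem)
      (max_lt (by linarith) (by linarith))
    have hUs : s ≤ U := le_csInf hDne fun u hu => le_of_lt hu.2.1
    have habove : ∀ x, U < x → x ≤ x₀ → f x = m * x + b := by
      intro x hx1 hx2
      obtain ⟨u, huD, hxu⟩ := exists_lt_of_csInf_lt hDne hx1
      exact huD.2.2 x (le_of_lt hxu) hx2
    have hUs' : U = s := by
      by_contra hne
      have hUs2 : s < U := lt_of_le_of_ne hUs (Ne.symm hne)
      obtain ⟨m', b', hmb'⟩ := h U hUs2 (lt_trans hUx₀ hx₀t)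
      rw [Metric.eventually_nhds_iff] at hmb'
      obtain ⟨δ', hδ', hball'⟩ := hmb'
      have hlt : U < min x₀ (U + δ') := lt_min hUx₀ (by linarith)
      have hagree : ∀ y, U < y → y < min x₀ (U + δ') → m * y + b = m' * y + b' := by
        intro y hy1 hy2
        have h1 : f y = m * y + b :=
          habove y hy1 (le_of_lt (lt_of_lt_of_le hy2 (min_le_left _ _)))
        have h2 : f y = m' * y + b' := by
          apply hball'
          rw [Real.dist_eq, abs_lt]
          have := lt_of_lt_of_le hy2 (min_le_right _ _)
          constructor <;> linarith
        rw [← h1, ← h2]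
      obtain ⟨hm, hb⟩ := affine_coeff_eq hlt hagree
      set u' := max ((s + U)/2) (U - δ'/2) with hu'
      have hu'U : u' < U := max_lt (by linarith) (by linarith)
      have hu'D : u' ∈ D := by
        refine ⟨le_of_lt (lt_trans hu'U hUx₀), lt_of_lt_of_le (by linarith) (le_max_left _ _), ?_⟩
        intro x hx1 hx2
        rcases lt_or_ge U x with hc | hc
        · exact habove x hc hx2
        · rw [hm, hb]
          apply hball'
          rw [Real.dist_eq, abs_lt]
          have := le_trans (le_max_right _ _) hx1
          constructor <;> linarith
      exact absurd (csInf_le hDbdd hu'D) (not_le.mpr hu'U)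
    intro x hx1 hx2
    exact habove x (hUs' ▸ hx1) hx2
  intro x hx1 hx2
  rcases le_or_gt x x₀ with hc | hc
  · exact hleft x hx1 hc
  · exact hright x (le_of_lt hc) hx2
/-- A finite set leaves a gap just to the right of `a`. -/
lemma exists_gap_right {F : Set ℝ} (hF : F.Finite) (a : ℝ) :
    ∃ δ > 0, ∀ x ∈ F, x ∉ Ioo a (a + δ) := by
  classical
  set T := hF.toFinset.filter (fun x => a < x) with hT
  rcases T.eq_empty_or_nonempty with hfe | hfne
  · refine ⟨1, one_pos, ?_⟩
    intro x hx hmem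
    have : x ∈ T := by
      rw [hT, Finset.mem_filter]
      exact ⟨hF.mem_toFinset.mpr hx, hmem.1⟩
    rw [hfe] at this
    exact absurd this (Finset.notMem_empty x)
  · have hμa : a < T.min' hfne := by
      have := T.min'_mem hfne
      simp only [hT, Finset.mem_filter] at this
      exact this.2
    refine ⟨T.min' hfne - a, by linarith, ?_⟩
    intro x hx hmem
    have hxT : x ∈ T := by
      rw [hT, Finset.mem_filter]
      exact ⟨hF.mem_toFinset.mpr hx, hmem.1⟩
    have := T.min'_le x hxT
    have h2 := hmem.2
    linarith

/-- A finite set leaves a gap just to the left of `b`. -/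
lemma exists_gap_left {F : Set ℝ} (hF : F.Finite) (b : ℝ) :
    ∃ δ > 0, ∀ x ∈ F, x ∉ Ioo (b - δ) b := by
  classical
  set T := hF.toFinset.filter (fun x => x < b) with hT
  rcases T.eq_empty_or_nonempty with hfe | hfne
  · refine ⟨1, one_pos, ?_⟩
    intro x hx hmem
    have : x ∈ T := by
      rw [hT, Finset.mem_filter]
      exact ⟨hF.mem_toFinset.mpr hx, hmem.2⟩
    rw [hfe] at this
    exact absurd this (Finset.notMem_empty x)
  · have hμb : T.max' hfne < b := by
      have := T.max'_mem hfne
      simp only [hT, Finset.mem_filter] at this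
      exact this.2
    refine ⟨b - T.max' hfne, by linarith, ?_⟩
    intro x hx hmem
    have hxT : x ∈ T := by
      rw [hT, Finset.mem_filter]
      exact ⟨hF.mem_toFinset.mpr hx, hmem.2⟩
    have := T.le_max' x hxT
    have h1 := hmem.1
    linarith

/-- Affine germ on the right of a fixed point `a ∈ [0,1)`. -/
lemma exists_germ_right_of_fix {g : PermR} (hg : IsPL g) {a : ℝ}
    (ha0 : 0 ≤ a) (ha1 : a < 1) (hfix : ap g a = a) :
    ∃ l ε : ℝ, 0 < l ∧ 0 < ε ∧ ∀ x, a < x → x < a + ε → ap g x = a + l * (x - a) := by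
  obtain ⟨δ, hδ, hgap⟩ := exists_gap_right hg.2.2 a
  set ε := min δ (1 - a) with hε
  have hεpos : 0 < ε := lt_min hδ (by linarith)
  have haff : ∀ x, a < x → x < a + ε → IsLocallyAffineAt g x := by
    intro x hx1 hx2
    have hx01 : x ∈ Ioo (0:ℝ) 1 := by
      constructor
      · linarith
      · have := lt_of_lt_of_le hx2 (by simp only [hε]; linarith [min_le_right δ (1-a)] : a + ε ≤ 1)
        exact this
    by_contra hcon
    exact hgap x ⟨hx01, hcon⟩ ⟨hx1, lt_of_lt_of_le hx2 (by simp only [hε]; linarith [min_le_left δ (1-a)])⟩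
  obtain ⟨m, c, hmc⟩ := affine_on_Ioo (show a < a + ε by linarith)
    (fun x h1 h2 => haff x h1 h2)
  -- m > 0
  have hx1 : a < a + ε/3 := by linarith
  have hx2 : a + ε/3 < a + ε/2 := by linarith
  have hx3 : a + ε/2 < a + ε := by linarith
  have hmpos : 0 < m := by
    have := hg.1 hx2
    rw [hmc _ hx1 (lt_trans hx2 hx3), hmc _ (lt_trans hx1 hx2) hx3] at this
    nlinarith
  -- m * a + c = a
  have hfixval : m * a + c = a := by
    rcases lt_trichotomy (m * a + c) a with hlt | heq | hgt
    · exfalso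
      -- pick x close to a so that ap g x = m x + c < a, contradicting ap g x > ap g a = a
      set x := a + min (ε/2) ((a - (m*a+c))/(2*m)) with hx
      clear_value x
      have hd1 : (0:ℝ) < (a - (m*a+c))/(2*m) := div_pos (by linarith) (by linarith)
      have hxa : a < x := by
        simp only [hx]
        have := lt_min (show (0:ℝ) < ε/2 by linarith) hd1
        linarith
      have hxε : x < a + ε := by
        simp only [hx]
        have := min_le_left (ε/2) ((a - (m*a+c))/(2*m))
        linarith
      have h1 : ap g a < ap g x := hg.1 hxa
      rw [hfix, hmc x hxa hxε] at h1
      have h2 : m * x + c = (m * a + c) + m * (x - a) := by ring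
      have h3 : m * (x - a) ≤ m * ((a - (m*a+c))/(2*m)) := by
        apply mul_le_mul_of_nonneg_left _ (le_of_lt hmpos)
        simp only [hx]
        have := min_le_right (ε/2) ((a - (m*a+c))/(2*m))
        linarith
      have h3' : m * (x - a) ≤ (a - (m*a+c))/2 := by
        have h4 : m * ((a - (m*a+c))/(2*m)) = (a - (m*a+c))/2 := by
          field_simp
        linarith
      linarith
    · exact heq
    · exfalso
      -- y strictly between a and m a + c cannot be attained
      set y := (a + (m*a+c))/2 with hy
      have hy1 : a < y := by simp only [hy]; linarith
      have hy2 : y < m*a + c := by simp only [hy]; linarith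
      obtain ⟨z, hz⟩ := (MulOpposite.unop g).surjective y
      have hz' : ap g z = y := hz
      have hza : a < z := by
        by_contra hle
        push_neg at hle
        have := hg.1.monotone hle
        rw [hfix, hz'] at this
        linarith
      -- z < x for every x in (a, a+ε)
      have hzlt : ∀ x, a < x → x < a + ε → z < x := by
        intro x h1 h2
        have hfz : ap g z < ap g x := by
          rw [hz', hmc x h1 h2]
          nlinarith
        exact (hg.1.lt_iff_lt).mp hfz
      set x := a + min (ε/2) ((z - a)/2) with hx
      clear_value x
      have hd1 : (0:ℝ) < (z - a)/2 := by linarith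
      have hxa : a < x := by
        simp only [hx]
        have := lt_min (show (0:ℝ) < ε/2 by linarith) hd1
        linarith
      have hxε : x < a + ε := by
        simp only [hx]
        have := min_le_left (ε/2) ((z - a)/2)
        linarith
      have := hzlt x hxa hxε
      have h5 := min_le_right (ε/2) ((z - a)/2)
      simp only [hx] at this
      linarith
  refine ⟨m, ε, hmpos, hεpos, ?_⟩
  intro x h1 h2
  rw [hmc x h1 h2]
  linarith [hfixval]

/-- Affine germ on the left of a fixed point `b ∈ (0,1]`. -/
lemma exists_germ_left_of_fix {g : PermR} (hg : IsPL g) {b : ℝ}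
    (hb0 : 0 < b) (hb1 : b ≤ 1) (hfix : ap g b = b) :
    ∃ l ε : ℝ, 0 < l ∧ 0 < ε ∧ ∀ x, b - ε < x → x < b → ap g x = b + l * (x - b) := by
  obtain ⟨δ, hδ, hgap⟩ := exists_gap_left hg.2.2 b
  set ε := min δ b with hε
  have hεpos : 0 < ε := lt_min hδ hb0
  have haff : ∀ x, b - ε < x → x < b → IsLocallyAffineAt g x := by
    intro x hx1 hx2
    have hx01 : x ∈ Ioo (0:ℝ) 1 := by
      constructor
      · have : b - ε ≥ 0 := by simp only [hε]; linarith [min_le_right δ b]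
        linarith
      · linarith
    by_contra hcon
    exact hgap x ⟨hx01, hcon⟩
      ⟨lt_of_le_of_lt (by simp only [hε]; linarith [min_le_left δ b] : b - δ ≤ b - ε) hx1, hx2⟩
  obtain ⟨m, c, hmc⟩ := affine_on_Ioo (show b - ε < b by linarith)
    (fun x h1 h2 => haff x h1 h2)
  have hx1 : b - ε < b - ε/2 := by linarith
  have hx2 : b - ε/2 < b - ε/3 := by linarith
  have hx3 : b - ε/3 < b := by linarith
  have hmpos : 0 < m := by
    have := hg.1 hx2
    rw [hmc _ hx1 (lt_trans hx2 hx3), hmc _ (lt_trans hx1 hx2) hx3] at this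
    nlinarith
  have hfixval : m * b + c = b := by
    rcases lt_trichotomy (m * b + c) b with hlt | heq | hgt
    · exfalso
      -- y strictly between m b + c and b cannot be attained
      set y := (b + (m*b+c))/2 with hy
      have hy1 : y < b := by simp only [hy]; linarith
      have hy2 : m*b + c < y := by simp only [hy]; linarith
      obtain ⟨z, hz⟩ := (MulOpposite.unop g).surjective y
      have hz' : ap g z = y := hz
      have hzb : z < b := by
        by_contra hle
        push_neg at hle
        have := hg.1.monotone hle
        rw [hfix, hz'] at this
        linarith
      have hzgt : ∀ x, b - ε < x → x < b → x < z := by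
        intro x h1 h2
        have hfz : ap g x < ap g z := by
          rw [hz', hmc x h1 h2]
          nlinarith
        exact (hg.1.lt_iff_lt).mp hfz
      set x := b - min (ε/2) ((b - z)/2) with hx
      clear_value x
      have hd1 : (0:ℝ) < (b - z)/2 := by linarith
      have hxb : x < b := by
        simp only [hx]
        have := lt_min (show (0:ℝ) < ε/2 by linarith) hd1
        linarith
      have hxε : b - ε < x := by
        simp only [hx]
        have := min_le_left (ε/2) ((b - z)/2)
        linarith
      have := hzgt x hxε hxb
      have h5 := min_le_right (ε/2) ((b - z)/2)
      simp only [hx] at this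
      linarith
    · exact heq
    · exfalso
      set x := b - min (ε/2) (((m*b+c) - b)/(2*m)) with hx
      clear_value x
      have hd1 : (0:ℝ) < ((m*b+c) - b)/(2*m) := div_pos (by linarith) (by linarith)
      have hxb : x < b := by
        simp only [hx]
        have := lt_min (show (0:ℝ) < ε/2 by linarith) hd1
        linarith
      have hxε : b - ε < x := by
        simp only [hx]
        have := min_le_left (ε/2) (((m*b+c) - b)/(2*m))
        linarith
      have h1 : ap g x < ap g b := hg.1 hxb
      rw [hfix, hmc x hxε hxb] at h1
      have h3 : m * (b - x) ≤ m * (((m*b+c) - b)/(2*m)) := by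
        apply mul_le_mul_of_nonneg_left _ (le_of_lt hmpos)
        simp only [hx]
        have := min_le_right (ε/2) (((m*b+c) - b)/(2*m))
        linarith
      have h3' : m * (b - x) ≤ ((m*b+c) - b)/2 := by
        have h4 : m * (((m*b+c) - b)/(2*m)) = ((m*b+c) - b)/2 := by
          field_simp
        linarith
      have h2 : m * x + c = (m*b+c) - m*(b-x) := by ring
      linarith
  refine ⟨m, ε, hmpos, hεpos, ?_⟩
  intro x h1 h2
  rw [hmc x h1 h2]
  linarith [hfixval]
/-- The germ slopes of `g` and `g⁻¹` at a common fixed point multiply to `1`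
(right-side version). -/
lemma germ_inv_one_right {g : PermR} {a lg eg lgi egi : ℝ}
    (hlg : 0 < lg) (heg : 0 < eg) (hlgi : 0 < lgi) (hegi : 0 < egi)
    (Hg : ∀ x, a < x → x < a + eg → ap g x = a + lg * (x - a))
    (Hgi : ∀ x, a < x → x < a + egi → ap g⁻¹ x = a + lgi * (x - a)) :
    lgi * lg = 1 := by
  have htpos : 0 < min eg (egi/lg) := lt_min heg (div_pos hegi hlg)
  set t := min eg (egi/lg) with ht
  have ht1 : t ≤ eg := min_le_left _ _
  have ht2 : t ≤ egi/lg := min_le_right _ _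
  clear_value t
  have h1 := Hg (a + t/2) (by linarith) (by linarith)
  have h1' : ap g (a + t/2) = a + lg * (t/2) := by rw [h1]; ring
  have hmem1 : a < a + lg*(t/2) := by nlinarith
  have hmem2 : a + lg*(t/2) < a + egi := by
    have h5 : lg * (t/2) < lg * (egi/lg) := by
      apply mul_lt_mul_of_pos_left _ hlg
      linarith
    have heq : lg * (egi/lg) = egi := by field_simp
    linarith
  have h2 := Hgi (a + lg*(t/2)) hmem1 hmem2
  have h3 : ap g⁻¹ (ap g (a + t/2)) = a + t/2 := ap_inv_ap g (a + t/2)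
  rw [h1', h2] at h3
  have h4 : (lgi * lg) * (t/2) = 1 * (t/2) := by linear_combination h3
  exact mul_right_cancel₀ (ne_of_gt (show (0:ℝ) < t/2 by linarith)) h4

/-- left-side version. -/
lemma germ_inv_one_left {g : PermR} {b lg eg lgi egi : ℝ}
    (hlg : 0 < lg) (heg : 0 < eg) (hlgi : 0 < lgi) (hegi : 0 < egi)
    (Hg : ∀ x, b - eg < x → x < b → ap g x = b + lg * (x - b))
    (Hgi : ∀ x, b - egi < x → x < b → ap g⁻¹ x = b + lgi * (x - b)) :
    lgi * lg = 1 := by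
  have htpos : 0 < min eg (egi/lg) := lt_min heg (div_pos hegi hlg)
  set t := min eg (egi/lg) with ht
  have ht1 : t ≤ eg := min_le_left _ _
  have ht2 : t ≤ egi/lg := min_le_right _ _
  clear_value t
  have h1 := Hg (b - t/2) (by linarith) (by linarith)
  have h1' : ap g (b - t/2) = b - lg * (t/2) := by rw [h1]; ring
  have hmem1 : b - lg*(t/2) < b := by nlinarith
  have hmem2 : b - egi < b - lg*(t/2) := by
    have h5 : lg * (t/2) < lg * (egi/lg) := by
      apply mul_lt_mul_of_pos_left _ hlg
      linarith
    have heq : lg * (egi/lg) = egi := by field_simp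
    linarith
  have h2 := Hgi (b - lg*(t/2)) hmem2 hmem1
  have h3 : ap g⁻¹ (ap g (b - t/2)) = b - t/2 := ap_inv_ap g (b - t/2)
  rw [h1', h2] at h3
  have h4 : (lgi * lg) * (t/2) = 1 * (t/2) := by linear_combination -h3
  exact mul_right_cancel₀ (ne_of_gt (show (0:ℝ) < t/2 by linarith)) h4
set_option maxHeartbeats 1000000 in
/-- Shared **left** endpoint overlap produces a transition chain:
if `g` has orbital `(a, βg)` and `k` has orbital `(a, c)` with `βg < c`,
and `k` moves `βg` to the right, then the commutator `g⁻¹k⁻¹gk` fixes a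
neighbourhood of `a` but moves `βg`, giving a transition chain with `g`. -/
lemma overlap_left {g k : PermR} {a βg c : ℝ}
    (hg : IsPL g) (hgi : IsPL g⁻¹) (hk : IsPL k) (hki : IsPL k⁻¹)
    (hu : IsPL (g⁻¹ * k⁻¹ * g * k))
    (Og : IsOrbital g a βg) (Ok : IsOrbital k a c) (hβc : βg < c)
    (hdir : βg < ap k βg) :
    ElemsTransitionChain g (g⁻¹ * k⁻¹ * g * k) := by
  have hap_u : ∀ x : ℝ, ap (g⁻¹ * k⁻¹ * g * k) x = ap k (ap g (ap k⁻¹ (ap g⁻¹ x))) :=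
    fun x => rfl
  have hac : a < c := Ok.1
  have haβ : a < βg := Og.1
  have hsubk := supp_subset_Ioo hk
  -- 0 ≤ a
  have ha0 : 0 ≤ a := by
    by_contra hlt
    push_neg at hlt
    have hmin : a < min 0 c := lt_min hlt hac
    have hmem : (a + min 0 c)/2 ∈ Ioo a c := by
      constructor
      · linarith
      · have := min_le_right (0:ℝ) c
        linarith
    have h01 := hsubk (Ok.2.1 hmem)
    have := min_le_left (0:ℝ) c
    have := h01.1
    linarith
  -- c ≤ 1
  have hc1 : c ≤ 1 := by
    by_contra hgt
    push_neg at hgt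
    have hmax : max a 1 < c := max_lt hac hgt
    have hmem : (max a 1 + c)/2 ∈ Ioo a c := by
      constructor
      · have := le_max_left a 1
        linarith
      · linarith
    have h01 := hsubk (Ok.2.1 hmem)
    have := le_max_right a 1
    have := h01.2
    linarith
  have ha1 : a < 1 := by linarith
  -- fixed points at a
  have hfg : ap g a = a := notMem_supp.mp Og.2.2.1
  have hfgi : ap g⁻¹ a = a := ap_inv_fix hfg
  have hfk : ap k a = a := notMem_supp.mp Ok.2.2.1
  have hfki : ap k⁻¹ a = a := ap_inv_fix hfk
  -- germs at a
  obtain ⟨lg, eg, hlg, heg, Hg⟩ := exists_germ_right_of_fix hg ha0 ha1 hfg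
  obtain ⟨lgi, egi, hlgi, hegi, Hgi⟩ := exists_germ_right_of_fix hgi ha0 ha1 hfgi
  obtain ⟨lk, ek, hlk, hek, Hk⟩ := exists_germ_right_of_fix hk ha0 ha1 hfk
  obtain ⟨lki, eki, hlki, heki, Hki⟩ := exists_germ_right_of_fix hki ha0 ha1 hfki
  have hprodg : lgi * lg = 1 := germ_inv_one_right hlg heg hlgi hegi Hg Hgi
  have hprodk : lki * lk = 1 := germ_inv_one_right hlk hek hlki heki Hk Hki
  -- the commutator fixes a right neighbourhood of a
  set ε := min (min egi (eki/lgi)) (min (eg/(lki*lgi)) (ek/lki)) with hεdef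
  have hεpos : 0 < ε := by
    apply lt_min (lt_min hegi (div_pos heki hlgi))
    exact lt_min (div_pos heg (mul_pos hlki hlgi)) (div_pos hek hlki)
  have E1 : ε ≤ egi := le_trans (min_le_left _ _) (min_le_left _ _)
  have E2 : ε ≤ eki/lgi := le_trans (min_le_left _ _) (min_le_right _ _)
  have E3 : ε ≤ eg/(lki*lgi) := le_trans (min_le_right _ _) (min_le_left _ _)
  have E4 : ε ≤ ek/lki := le_trans (min_le_right _ _) (min_le_right _ _)
  clear_value ε
  have hfixnear : ∀ x, a < x → x < a + ε → ap (g⁻¹ * k⁻¹ * g * k) x = x := by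
    intro x h1 h2
    have hxa : 0 < x - a := by linarith
    have e1 := Hgi x h1 (by linarith)
    have hy1a : a < a + lgi*(x-a) := by
      have h6 : 0 < lgi*(x-a) := mul_pos hlgi hxa
      linarith
    have hy1b : a + lgi*(x-a) < a + eki := by
      have h5 : (x - a) * lgi < eki := (lt_div_iff₀ hlgi).mp (by linarith)
      have h6 : lgi*(x-a) = (x-a)*lgi := mul_comm _ _
      linarith
    have e2' := Hki (a + lgi*(x-a)) hy1a hy1b
    have e2 : ap k⁻¹ (a + lgi*(x-a)) = a + lki*(lgi*(x-a)) := by rw [e2']; ring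
    have hy2a : a < a + lki*(lgi*(x-a)) := by
      have : 0 < lki*(lgi*(x-a)) := by positivity
      linarith
    have hy2b : a + lki*(lgi*(x-a)) < a + eg := by
      have h5 : (x - a) * (lki*lgi) < eg := (lt_div_iff₀ (mul_pos hlki hlgi)).mp (by linarith)
      have h6 : lki*(lgi*(x-a)) = (x-a)*(lki*lgi) := by ring
      linarith
    have e3' := Hg (a + lki*(lgi*(x-a))) hy2a hy2b
    have e3 : ap g (a + lki*(lgi*(x-a))) = a + lki*(x-a) := by
      rw [e3']
      linear_combination (lki*(x-a)) * hprodg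
    have hy3a : a < a + lki*(x-a) := by
      have : 0 < lki*(x-a) := by positivity
      linarith
    have hy3b : a + lki*(x-a) < a + ek := by
      have h5 : (x - a) * lki < ek := (lt_div_iff₀ hlki).mp (by linarith)
      have h6 : lki*(x-a) = (x-a)*lki := mul_comm _ _
      linarith
    have e4' := Hk (a + lki*(x-a)) hy3a hy3b
    have e4 : ap k (a + lki*(x-a)) = x := by
      rw [e4']
      linear_combination (x-a) * hprodk
    rw [hap_u x, e1, e2, e3, e4]
  -- the commutator moves βg
  have hfgβ : ap g⁻¹ βg = βg := ap_inv_fix (notMem_supp.mp Og.2.2.2)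
  have hza : a < ap k⁻¹ βg := by
    have := hki.1 haβ
    rwa [hfki] at this
  have hkz : ap k (ap k⁻¹ βg) = βg := ap_ap_inv k βg
  have hzβ : ap k⁻¹ βg < βg := by
    have h5 : ap k (ap k⁻¹ βg) < ap k βg := by rw [hkz]; exact hdir
    exact hk.1.lt_iff_lt.mp h5
  have hzsupp : ap k⁻¹ βg ∈ Supp g := Og.2.1 ⟨hza, hzβ⟩
  have humoves : ap (g⁻¹ * k⁻¹ * g * k) βg ≠ βg := by
    rw [hap_u, hfgβ]
    intro hcon
    apply hzsupp
    have h5 : ap k (ap g (ap k⁻¹ βg)) = ap k (ap k⁻¹ βg) := by rw [hkz]; exact hcon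
    exact hk.1.injective h5
  obtain ⟨α, β', Ou, hα, hβ'⟩ := exists_orbital hu (mem_supp_iff.mpr humoves)
  have hαa : a < α := by
    by_contra hle
    push_neg at hle
    have hmpos : 0 < min ε (βg - a) := lt_min hεpos (by linarith)
    set x := a + min ε (βg - a) / 2 with hxd
    clear_value x
    have hx1 : a < x := by rw [hxd]; linarith
    have hx2 : x < a + ε := by
      rw [hxd]
      have := min_le_left ε (βg - a)
      linarith
    have hx3 : x < βg := by
      rw [hxd]
      have := min_le_right ε (βg - a)
      linarith
    have hmem : x ∈ Supp (g⁻¹ * k⁻¹ * g * k) :=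
      Ou.2.1 ⟨lt_of_le_of_lt hle hx1, lt_trans hx3 hβ'⟩
    exact hmem (hfixnear x hx1 hx2)
  exact ⟨a, βg, α, β', Og, Ou, hαa, hα, hβ'⟩

set_option maxHeartbeats 1000000 in
/-- Shared **right** endpoint overlap produces a transition chain. -/
lemma overlap_right {g k : PermR} {γ b c : ℝ}
    (hg : IsPL g) (hgi : IsPL g⁻¹) (hk : IsPL k) (hki : IsPL k⁻¹)
    (hu : IsPL (g⁻¹ * k⁻¹ * g * k))
    (Og : IsOrbital g γ b) (Ok : IsOrbital k c b) (hc : c < γ)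
    (hdir : ap k γ < γ) :
    ElemsTransitionChain (g⁻¹ * k⁻¹ * g * k) g := by
  have hap_u : ∀ x : ℝ, ap (g⁻¹ * k⁻¹ * g * k) x = ap k (ap g (ap k⁻¹ (ap g⁻¹ x))) :=
    fun x => rfl
  have hcb : c < b := Ok.1
  have hγb : γ < b := Og.1
  have hsubk := supp_subset_Ioo hk
  -- 0 ≤ c
  have hc0 : 0 ≤ c := by
    by_contra hlt
    push_neg at hlt
    have hmin : c < min 0 b := lt_min hlt hcb
    have hmem : (c + min 0 b)/2 ∈ Ioo c b := by
      constructor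
      · linarith
      · have := min_le_right (0:ℝ) b
        linarith
    have h01 := hsubk (Ok.2.1 hmem)
    have := min_le_left (0:ℝ) b
    have := h01.1
    linarith
  -- b ≤ 1
  have hb1 : b ≤ 1 := by
    by_contra hgt
    push_neg at hgt
    have hmax : max c 1 < b := max_lt hcb hgt
    have hmem : (max c 1 + b)/2 ∈ Ioo c b := by
      constructor
      · have := le_max_left c 1
        linarith
      · linarith
    have h01 := hsubk (Ok.2.1 hmem)
    have := le_max_right c 1
    have := h01.2
    linarith
  have hb0 : 0 < b := by linarith
  -- fixed points at b
  have hfg : ap g b = b := notMem_supp.mp Og.2.2.2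
  have hfgi : ap g⁻¹ b = b := ap_inv_fix hfg
  have hfk : ap k b = b := notMem_supp.mp Ok.2.2.2
  have hfki : ap k⁻¹ b = b := ap_inv_fix hfk
  -- germs at b (from the left)
  obtain ⟨lg, eg, hlg, heg, Hg⟩ := exists_germ_left_of_fix hg hb0 hb1 hfg
  obtain ⟨lgi, egi, hlgi, hegi, Hgi⟩ := exists_germ_left_of_fix hgi hb0 hb1 hfgi
  obtain ⟨lk, ek, hlk, hek, Hk⟩ := exists_germ_left_of_fix hk hb0 hb1 hfk
  obtain ⟨lki, eki, hlki, heki, Hki⟩ := exists_germ_left_of_fix hki hb0 hb1 hfki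
  have hprodg : lgi * lg = 1 := germ_inv_one_left hlg heg hlgi hegi Hg Hgi
  have hprodk : lki * lk = 1 := germ_inv_one_left hlk hek hlki heki Hk Hki
  set ε := min (min egi (eki/lgi)) (min (eg/(lki*lgi)) (ek/lki)) with hεdef
  have hεpos : 0 < ε := by
    apply lt_min (lt_min hegi (div_pos heki hlgi))
    exact lt_min (div_pos heg (mul_pos hlki hlgi)) (div_pos hek hlki)
  have E1 : ε ≤ egi := le_trans (min_le_left _ _) (min_le_left _ _)
  have E2 : ε ≤ eki/lgi := le_trans (min_le_left _ _) (min_le_right _ _)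
  have E3 : ε ≤ eg/(lki*lgi) := le_trans (min_le_right _ _) (min_le_left _ _)
  have E4 : ε ≤ ek/lki := le_trans (min_le_right _ _) (min_le_right _ _)
  clear_value ε
  have hfixnear : ∀ x, b - ε < x → x < b → ap (g⁻¹ * k⁻¹ * g * k) x = x := by
    intro x h1 h2
    have hxb : 0 < b - x := by linarith
    have e1 := Hgi x (by linarith) h2
    have hy1a : b + lgi*(x-b) < b := by
      have h6 : 0 < lgi*(b-x) := mul_pos hlgi hxb
      have h7 : lgi*(x-b) = -(lgi*(b-x)) := by ring
      linarith
    have hy1b : b - eki < b + lgi*(x-b) := by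
      have h5 : (b - x) * lgi < eki := (lt_div_iff₀ hlgi).mp (by linarith)
      have h6 : lgi*(x-b) = -((b-x)*lgi) := by ring
      linarith
    have e2' := Hki (b + lgi*(x-b)) hy1b hy1a
    have e2 : ap k⁻¹ (b + lgi*(x-b)) = b + lki*(lgi*(x-b)) := by rw [e2']; ring
    have hy2a : b + lki*(lgi*(x-b)) < b := by
      have h6 : 0 < lki*(lgi*(b-x)) := mul_pos hlki (mul_pos hlgi hxb)
      have h7 : lki*(lgi*(x-b)) = -(lki*(lgi*(b-x))) := by ring
      linarith
    have hy2b : b - eg < b + lki*(lgi*(x-b)) := by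
      have h5 : (b - x) * (lki*lgi) < eg := (lt_div_iff₀ (mul_pos hlki hlgi)).mp (by linarith)
      have h6 : lki*(lgi*(x-b)) = -((b-x)*(lki*lgi)) := by ring
      linarith
    have e3' := Hg (b + lki*(lgi*(x-b))) hy2b hy2a
    have e3 : ap g (b + lki*(lgi*(x-b))) = b + lki*(x-b) := by
      rw [e3']
      linear_combination (lki*(x-b)) * hprodg
    have hy3a : b + lki*(x-b) < b := by
      have h6 : 0 < lki*(b-x) := mul_pos hlki hxb
      have h7 : lki*(x-b) = -(lki*(b-x)) := by ring
      linarith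
    have hy3b : b - ek < b + lki*(x-b) := by
      have h5 : (b - x) * lki < ek := (lt_div_iff₀ hlki).mp (by linarith)
      have h6 : lki*(x-b) = -((b-x)*lki) := by ring
      linarith
    have e4' := Hk (b + lki*(x-b)) hy3b hy3a
    have e4 : ap k (b + lki*(x-b)) = x := by
      rw [e4']
      linear_combination (x-b) * hprodk
    rw [hap_u x, e1, e2, e3, e4]
  -- the commutator moves γ
  have hfgγ : ap g⁻¹ γ = γ := ap_inv_fix (notMem_supp.mp Og.2.2.1)
  have hzb : ap k⁻¹ γ < b := by
    have := hki.1 hγb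
    rwa [hfki] at this
  have hkz : ap k (ap k⁻¹ γ) = γ := ap_ap_inv k γ
  have hzγ : γ < ap k⁻¹ γ := by
    have h5 : ap k γ < ap k (ap k⁻¹ γ) := by rw [hkz]; exact hdir
    exact hk.1.lt_iff_lt.mp h5
  have hzsupp : ap k⁻¹ γ ∈ Supp g := Og.2.1 ⟨hzγ, hzb⟩
  have humoves : ap (g⁻¹ * k⁻¹ * g * k) γ ≠ γ := by
    rw [hap_u, hfgγ]
    intro hcon
    apply hzsupp
    have h5 : ap k (ap g (ap k⁻¹ γ)) = ap k (ap k⁻¹ γ) := by rw [hkz]; exact hcon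
    exact hk.1.injective h5
  obtain ⟨α, β', Ou, hα, hβ'⟩ := exists_orbital hu (mem_supp_iff.mpr humoves)
  have hβ'b : β' < b := by
    by_contra hle
    push_neg at hle
    have hmpos : 0 < min ε (b - γ) := lt_min hεpos (by linarith)
    set x := b - min ε (b - γ) / 2 with hxd
    clear_value x
    have hx1 : x < b := by rw [hxd]; linarith
    have hx2 : b - ε < x := by
      rw [hxd]
      have := min_le_left ε (b - γ)
      linarith
    have hx3 : γ < x := by
      rw [hxd]
      have := min_le_right ε (b - γ)
      linarith
    have hmem : x ∈ Supp (g⁻¹ * k⁻¹ * g * k) :=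
      Ou.2.1 ⟨lt_trans hα hx3, lt_of_lt_of_le hx1 hle⟩
    exact hmem (hfixnear x hx2 hx1)
  exact ⟨α, β', γ, b, Ou, Og, hα, hβ', hβ'b⟩

theorem statement6 (H : Subgroup PermR) (hPL : ∀ g ∈ H, IsPL g)
    (hchainless : ¬ AdmitsTransitionChain H) :
    ∀ G : Subgroup PermR, G ≤ H → ∀ a b : ℝ, IsGroupOrbital G a b →
      ∀ g ∈ G, (RealisesLeftEnd g a b ↔ RealisesRightEnd g a b) := by
  intro G hGH a b hOrb g hgG
  have hPLmem : ∀ x ∈ G, IsPL x := fun x hx => hPL x (hGH hx)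
  constructor
  · -- left end realised ⇒ right end realised
    rintro ⟨b₁, hb₁le, hOg⟩
    rcases eq_or_lt_of_le hb₁le with heq | hb₁b
    · exact ⟨a, le_refl a, heq ▸ hOg⟩
    · exfalso
      apply hchainless
      have hb₁mem : b₁ ∈ GSupp G := hOrb.2.1 ⟨hOg.1, hb₁b⟩
      simp only [GSupp, Set.mem_iUnion] at hb₁mem
      obtain ⟨h, hhG, hmoves⟩ := hb₁mem
      rw [mem_supp_iff] at hmoves
      -- find w ∈ G pushing b₁ strictly to the right
      obtain ⟨w, hwG, hwmove⟩ : ∃ w, w ∈ G ∧ b₁ < ap w b₁ := by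
        rcases lt_or_gt_of_ne hmoves with hlt | hgt
        · refine ⟨h⁻¹, inv_mem hhG, ?_⟩
          by_contra hle
          push_neg at hle
          have := (hPLmem h hhG).1.monotone hle
          rw [ap_ap_inv] at this
          linarith
        · exact ⟨h, hhG, hgt⟩
      have hg'G : w⁻¹ * g * w ∈ G := mul_mem (mul_mem (inv_mem hwG) hgG) hwG
      have hwa : ap w a = a := ap_eq_self_of_notMem_GSupp hwG hOrb.2.2.1
      have hOg' : IsOrbital (w⁻¹ * g * w) a (ap w b₁) := by
        have := isOrbital_conj (hPLmem w hwG).1 hOg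
        rwa [hwa] at this
      have hb₁supp : b₁ ∈ Supp (w⁻¹ * g * w) := hOg'.2.1 ⟨hOg.1, hwmove⟩
      rw [mem_supp_iff] at hb₁supp
      -- pick the direction of the conjugate that moves b₁ to the right
      obtain ⟨k, hkG, Ok, hdir⟩ :
          ∃ k, k ∈ G ∧ IsOrbital k a (ap w b₁) ∧ b₁ < ap k b₁ := by
        rcases lt_or_gt_of_ne hb₁supp with hlt | hgt
        · refine ⟨(w⁻¹ * g * w)⁻¹, inv_mem hg'G, isOrbital_inv hOg', ?_⟩
          by_contra hle
          push_neg at hle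
          have := (hPLmem _ hg'G).1.monotone hle
          rw [ap_ap_inv] at this
          linarith
        · exact ⟨w⁻¹ * g * w, hg'G, hOg', hgt⟩
      have hkiG : k⁻¹ ∈ G := inv_mem hkG
      have huG : g⁻¹ * k⁻¹ * g * k ∈ G :=
        mul_mem (mul_mem (mul_mem (inv_mem hgG) hkiG) hgG) hkG
      exact ⟨g, hGH hgG, g⁻¹ * k⁻¹ * g * k, hGH huG,
        overlap_left (hPLmem _ hgG) (hPLmem _ (inv_mem hgG)) (hPLmem _ hkG)
          (hPLmem _ hkiG) (hPLmem _ huG) hOg Ok hwmove hdir⟩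
  · -- right end realised ⇒ left end realised
    rintro ⟨c₁, hc₁ge, hOg⟩
    rcases eq_or_lt_of_le hc₁ge with heq | hac₁
    · exact ⟨b, le_refl b, heq ▸ hOg⟩
    · exfalso
      apply hchainless
      have hc₁mem : c₁ ∈ GSupp G := hOrb.2.1 ⟨hac₁, hOg.1⟩
      simp only [GSupp, Set.mem_iUnion] at hc₁mem
      obtain ⟨h, hhG, hmoves⟩ := hc₁mem
      rw [mem_supp_iff] at hmoves
      -- find w ∈ G pushing c₁ strictly to the left
      obtain ⟨w, hwG, hwmove⟩ : ∃ w, w ∈ G ∧ ap w c₁ < c₁ := by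
        rcases lt_or_gt_of_ne hmoves with hlt | hgt
        · exact ⟨h, hhG, hlt⟩
        · refine ⟨h⁻¹, inv_mem hhG, ?_⟩
          by_contra hle
          push_neg at hle
          have := (hPLmem h hhG).1.monotone hle
          rw [ap_ap_inv] at this
          linarith
      have hg'G : w⁻¹ * g * w ∈ G := mul_mem (mul_mem (inv_mem hwG) hgG) hwG
      have hwb : ap w b = b := ap_eq_self_of_notMem_GSupp hwG hOrb.2.2.2
      have hOg' : IsOrbital (w⁻¹ * g * w) (ap w c₁) b := by
        have := isOrbital_conj (hPLmem w hwG).1 hOg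
        rwa [hwb] at this
      have hc₁supp : c₁ ∈ Supp (w⁻¹ * g * w) := hOg'.2.1 ⟨hwmove, hOg.1⟩
      rw [mem_supp_iff] at hc₁supp
      obtain ⟨k, hkG, Ok, hdir⟩ :
          ∃ k, k ∈ G ∧ IsOrbital k (ap w c₁) b ∧ ap k c₁ < c₁ := by
        rcases lt_or_gt_of_ne hc₁supp with hlt | hgt
        · exact ⟨w⁻¹ * g * w, hg'G, hOg', hlt⟩
        · refine ⟨(w⁻¹ * g * w)⁻¹, inv_mem hg'G, isOrbital_inv hOg', ?_⟩
          by_contra hle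
          push_neg at hle
          have := (hPLmem _ hg'G).1.monotone hle
          rw [ap_ap_inv] at this
          linarith
      have hkiG : k⁻¹ ∈ G := inv_mem hkG
      have huG : g⁻¹ * k⁻¹ * g * k ∈ G :=
        mul_mem (mul_mem (mul_mem (inv_mem hgG) hkiG) hgG) hkG
      exact ⟨g⁻¹ * k⁻¹ * g * k, hGH huG, g, hGH hgG,
        overlap_right (hPLmem _ hgG) (hPLmem _ (inv_mem hgG)) (hPLmem _ hkG)
          (hPLmem _ hkiG) (hPLmem _ huG) hOg Ok hwmove hdir⟩

end PLPaper
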